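/- For coprime positive integers r < s, the numerical semigroup generated by r and s has exactly (r-1)(s-1)/2 gaps (positive integers not in the semigroup). -/

import Mathlib

/-- For coprime positive integers `r < s`, the numerical semigroup generated by
`r` and `s` has exactly `(r-1)*(s-1)/2` gaps. -/
theorem numerical_semigroup_gap_count (r s : ℕ) (hr : 1 < r) (hrs : r < s)
    (hco : Nat.Coprime r s) :
    {n : ℕ | 0 < n ∧ ¬ ∃ a b : ℕ, a * r + b * s = n}.ncard = (r - 1) * (s - 1) / 2 := by
  have hs1 : 1 < s := lt_trans hr hrs
  have hspos : 0 < s := by omega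
  obtain ⟨u, hu⟩ : ∃ u, r * u % s = 1 := by
    obtain ⟨m, -, hm⟩ := Nat.exists_mul_mod_eq_one_of_coprime hco hs1; exact ⟨m, hm⟩
  set a0 : ℕ → ℕ := fun n => n * u % s with ha0def
  have ha0_lt : ∀ n, a0 n < s := fun n => Nat.mod_lt _ hspos
  have ha0_mod : ∀ n, a0 n * r % s = n % s := by
    intro n
    have h1 : a0 n * r % s = n * u * r % s := Nat.mod_mul_mod _ _ _
    have h2 : n * u * r % s = n % s * (u * r % s) % s := by
      rw [mul_assoc, Nat.mul_mod]
    have h3 : u * r % s = 1 := by rwa [mul_comm]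
    rw [h1, h2, h3, mul_one, Nat.mod_mod_of_dvd _ dvd_rfl]
  -- uniqueness of the residue
  have ha0_unique : ∀ n a, a < s → a * r % s = n % s → a = a0 n := by
    intro n a ha hmod
    have h1 : a * r ≡ a0 n * r [MOD s] := by
      unfold Nat.ModEq; rw [hmod, ha0_mod]
    have h2 : a ≡ a0 n [MOD s] := Nat.ModEq.cancel_right_of_coprime hco.symm h1
    have := h2.eq_of_lt_of_lt ha (ha0_lt n)
    exact this
  -- characterization of representability
  have hrep : ∀ n, (∃ a b : ℕ, a * r + b * s = n) ↔ a0 n * r ≤ n := by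
    intro n
    constructor
    · rintro ⟨a, b, rfl⟩
      have hmod : (a % s) * r % s = (a * r + b * s) % s := by
        rw [Nat.add_mul_mod_self_right, Nat.mod_mul_mod]
      have := ha0_unique _ _ (Nat.mod_lt _ hspos) hmod
      rw [← this]
      calc a % s * r ≤ a * r := Nat.mul_le_mul_right _ (Nat.mod_le _ _)
        _ ≤ a * r + b * s := Nat.le_add_right _ _
    · intro hle
      have hdvd : s ∣ n - a0 n * r := by
        have : a0 n * r ≡ n [MOD s] := ha0_mod n
        exact (Nat.modEq_iff_dvd' hle).mp this
      obtain ⟨b, hb⟩ := hdvd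
      exact ⟨a0 n, b, by rw [mul_comm b s]; omega⟩
  -- the integer witness
  have hk : ∀ n, ∃ k : ℤ, (a0 n : ℤ) * r - n = k * s := by
    intro n
    have : (s:ℤ) ∣ (n : ℤ) - (a0 n * r : ℕ) := (Nat.modEq_iff_dvd).mp (ha0_mod n)
    obtain ⟨k, hk⟩ := this
    exact ⟨-k, by push_cast at hk ⊢; linarith⟩
  set F : ℕ := r * s - r - s with hFdef
  have hrsle : r + s ≤ r * s := Nat.add_le_mul hr hs1
  have hFs : F + r + s = r * s := by omega
  -- everything above F is representable
  have hbig : ∀ n, F < n → a0 n * r ≤ n := by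
    intro n hn
    obtain ⟨k, hk⟩ := hk n
    by_contra hcon
    push_neg at hcon
    have h1 : (1:ℤ) ≤ k := by
      rcases le_or_gt k 0 with h | h
      · exfalso
        have : k * s ≤ 0 := mul_nonpos_of_nonpos_of_nonneg h (by positivity)
        have h2 : (n:ℤ) < a0 n * r := by exact_mod_cast hcon
        linarith
      · omega
    have h2 : (s:ℤ) ≤ k * s := le_mul_of_one_le_left (by positivity) h1
    have h3 : (a0 n : ℤ) * r ≤ (s - 1) * r := by
      have : (a0 n : ℤ) ≤ (s:ℤ) - 1 := by
        have := ha0_lt n; omega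
      exact mul_le_mul_of_nonneg_right this (by positivity)
    have h4 : (F:ℤ) + r + s = r * s := by exact_mod_cast hFs
    have h5 : (F:ℤ) < n := by exact_mod_cast hn
    nlinarith
  -- the symmetry: for n ≤ F, n representable iff F - n not representable
  have hsym : ∀ n ≤ F, (a0 n * r ≤ n ↔ ¬ a0 (F - n) * r ≤ F - n) := by
    intro n hn
    have ha0Fn : a0 (F - n) = s - 1 - a0 n := by
      symm
      apply ha0_unique
      · omega
      · -- (s - 1 - a0 n) * r ≡ F - n [MOD s]
        have h1 : (s - 1 - a0 n) * r ≡ (F - n) [MOD s] := by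
          rw [Nat.modEq_iff_dvd]
          obtain ⟨k, hk⟩ := hk n
          have hFn : (↑(F - n) : ℤ) = (F:ℤ) - n := by
            have : n ≤ F := hn
            omega
          have hsa : (↑(s - 1 - a0 n) : ℤ) = (s:ℤ) - 1 - a0 n := by
            have := ha0_lt n; omega
          have h4 : (F:ℤ) + r + s = r * s := by exact_mod_cast hFs
          refine ⟨k - 1, ?_⟩
          rw [Nat.cast_mul, hFn, hsa]
          linear_combination hk + h4
        exact h1
    obtain ⟨k, hk⟩ := hk n
    have hFn : (↑(F - n) : ℤ) = (F:ℤ) - n := by push_cast [hn]; ring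
    have hsa : (↑(s - 1 - a0 n) : ℤ) = (s:ℤ) - 1 - a0 n := by
      have := ha0_lt n; omega
    have h4 : (F:ℤ) + r + s = r * s := by exact_mod_cast hFs
    have hks : k ≤ 0 ∨ 1 ≤ k := by omega
    constructor
    · intro hle hle2
      -- a0 n * r ≤ n means k ≤ 0 ; a0 (F-n) * r ≤ F - n means k ≥ 1
      have h5 : (a0 n : ℤ) * r ≤ n := by exact_mod_cast hle
      have h6 : (↑(a0 (F - n)) : ℤ) * r ≤ (F:ℤ) - n := by
        rw [← hFn]; exact_mod_cast hle2
      rw [ha0Fn, hsa] at h6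
      -- h6 : (s - 1 - a0 n) * r ≤ F - n, i.e. n + s ≤ a0 n * r
      have h7 : (n:ℤ) + s ≤ a0 n * r := by nlinarith
      linarith
    · intro hnle
      by_contra hcon
      push_neg at hcon
      have h5 : (n:ℤ) < a0 n * r := by exact_mod_cast hcon
      have h6 : (1:ℤ) ≤ k := by
        rcases hks with h | h
        · exfalso
          have : k * s ≤ 0 := mul_nonpos_of_nonpos_of_nonneg (by exact_mod_cast h) (by positivity)
          linarith
        · exact_mod_cast h
      have h7 : (s:ℤ) ≤ k * s := le_mul_of_one_le_left (by positivity) h6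
      apply hnle
      have h8 : (↑(a0 (F - n)) : ℤ) * r ≤ ↑(F - n) := by
        rw [ha0Fn, hsa, hFn]
        nlinarith
      exact_mod_cast h8
  -- counting
  classical
  set S : Finset ℕ := (Finset.range (F + 1)).filter (fun n => ¬ a0 n * r ≤ n) with hSdef
  set T : Finset ℕ := (Finset.range (F + 1)).filter (fun n => a0 n * r ≤ n) with hTdef
  have hset : {n : ℕ | 0 < n ∧ ¬ ∃ a b : ℕ, a * r + b * s = n} = ↑S := by
    ext n
    simp only [Set.mem_setOf_eq, hSdef, Finset.coe_filter, Finset.mem_range, Set.mem_setOf_eq]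
    constructor
    · rintro ⟨hpos, hnr⟩
      rw [hrep] at hnr
      refine ⟨?_, hnr⟩
      by_contra h
      exact hnr (hbig n (by omega))
    · rintro ⟨hlt, hnr⟩
      refine ⟨?_, fun h => hnr ((hrep n).mp h)⟩
      rcases Nat.eq_zero_or_pos n with rfl | h
      · exact absurd (by simp [ha0def]) hnr
      · exact h
  have hcard : S.card = T.card := by
    apply Finset.card_bij (fun n _ => F - n)
    · intro a ha
      simp only [hSdef, Finset.mem_filter, Finset.mem_range] at ha
      simp only [hTdef, Finset.mem_filter, Finset.mem_range]
      refine ⟨by omega, ?_⟩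
      have := (hsym a (by omega)).2
      by_contra h
      exact ha.2 ((hsym a (by omega)).mpr h)
    · intro a ha b hb hab
      simp only [hSdef, Finset.mem_filter, Finset.mem_range] at ha hb
      omega
    · intro b hb
      simp only [hTdef, Finset.mem_filter, Finset.mem_range] at hb
      refine ⟨F - b, ?_, by omega⟩
      simp only [hSdef, Finset.mem_filter, Finset.mem_range]
      refine ⟨by omega, ?_⟩
      have h1 := (hsym (F - b) (by omega)).1
      intro h
      have h2 := h1 h
      rw [(by omega : F - (F - b) = b)] at h2
      exact h2 hb.2
  have hsum : S.card + T.card = F + 1 := by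
    rw [hSdef, hTdef]
    rw [add_comm]
    have := Finset.card_filter_add_card_filter_not
      (s := Finset.range (F + 1)) (p := fun n => a0 n * r ≤ n)
    rw [this, Finset.card_range]
  have hF1 : F + 1 = (r - 1) * (s - 1) := by
    have h1 : (r - 1 + 1) * ((s - 1) + 1) = (r - 1) * (s - 1) + (r - 1) + (s - 1) + 1 := by
      ring
    have h2 : (r - 1 + 1) * ((s - 1) + 1) = r * s := by
      rw [Nat.sub_add_cancel (by omega), Nat.sub_add_cancel (by omega)]
    omega
  rw [hset, Set.ncard_coe_finset]
  omega
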